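/- arXiv:2405.11184 — 5 statements merged into one kernel-verified Lean document; each statement's English description precedes it below -/
import Mathlib

section
/- Let Q be a finite quiver without cycles, and for each i ≥ 1 let n_Q^i denote the linear subspace of n_Q spanned by the paths of length i. Then [n_Q^i, n_Q^j] = n_Q^{i+j} for all i, j ≥ 1. -/
open scoped Classical

noncomputable section

variable {V E : Type*}

/-- A (positive-length) path in the quiver `(V, E, s, t)`: a nonempty list of arrows
in which consecutive arrows are composable, i.e. `t αᵢ = s αᵢ₊₁`. -/
def IsPath (s t : E → V) (l : List E) : Prop :=
  l ≠ [] ∧ l.Chain' (fun a b => t a = s b)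

/-- The source of a (nonempty) list of arrows, as an `Option`. -/
def src? (s : E → V) (l : List E) : Option V := l.head?.map s

/-- The target of a (nonempty) list of arrows, as an `Option`. -/
def tgt? (t : E → V) (l : List E) : Option V := l.getLast?.map t

/-- The quiver has no cycles: there is no path whose source equals its target. -/
def NoCycles (s t : E → V) : Prop :=
  ∀ l : List E, IsPath s t l → src? s l ≠ tgt? t l

/-- `m` is the maximum of the lengths of paths of the quiver (the length of the quiver). -/
def IsMaxPathLen (s t : E → V) (m : ℕ) : Prop :=
  (∃ l : List E, IsPath s t l ∧ l.length = m) ∧ ∀ l : List E, IsPath s t l → l.length ≤ m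

/-- The set `Path(Q)` of all paths of length `≥ 1`, as a subtype of lists of arrows. -/
abbrev PathQ (s t : E → V) := {l : List E // IsPath s t l}

/-- The underlying vector space of the Lie algebra `n_Q` obtained from the quiver:
the real vector space with basis `Path(Q)`. -/
abbrev nQ (s t : E → V) := PathQ s t →₀ ℝ

/-- The Lie bracket of two basis paths: `[x, y] = xy` if the concatenation `xy` is a path,
`[x, y] = -yx` if the concatenation `yx` is a path, and `[x, y] = 0` otherwise. -/
def braBasis (s t : E → V) (x y : PathQ s t) : nQ s t :=
  if h : IsPath s t (x.val ++ y.val) then Finsupp.single ⟨x.val ++ y.val, h⟩ 1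
  else if h' : IsPath s t (y.val ++ x.val) then -Finsupp.single ⟨y.val ++ x.val, h'⟩ 1
  else 0

/-- The Lie bracket of `n_Q`, extended bilinearly from basis paths. -/
def bra (s t : E → V) (u v : nQ s t) : nQ s t :=
  u.sum fun x cx => v.sum fun y cy => (cx * cy) • braBasis s t x y

/-- The span of all brackets of elements of two subspaces of `n_Q`. -/
def braSpan (s t : E → V) (M N : Submodule ℝ (nQ s t)) : Submodule ℝ (nQ s t) :=
  Submodule.span ℝ {z | ∃ u ∈ M, ∃ v ∈ N, z = bra s t u v}

/-- The subspace `n_Q^i` of `n_Q` spanned by the paths of length `i`. -/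
def lenSubspace (s t : E → V) (i : ℕ) : Submodule ℝ (nQ s t) :=
  Submodule.span ℝ {u | ∃ p : PathQ s t, p.val.length = i ∧ u = Finsupp.single p 1}
lemma bra_single_single (s t : E → V) (x y : PathQ s t) (c d : ℝ) :
    bra s t (Finsupp.single x c) (Finsupp.single y d) = (c * d) • braBasis s t x y := by
  unfold bra
  rw [Finsupp.sum_single_index, Finsupp.sum_single_index]
  · simp
  · simp [Finsupp.sum_single_index]

lemma bra_zero_left (s t : E → V) (v : nQ s t) : bra s t 0 v = 0 := by
  unfold bra; simp

lemma bra_add_left (s t : E → V) (u u' v : nQ s t) :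
    bra s t (u + u') v = bra s t u v + bra s t u' v := by
  unfold bra
  rw [Finsupp.sum_add_index] <;> simp [add_mul, add_smul, Finsupp.sum_add]

lemma bra_add_right (s t : E → V) (u v v' : nQ s t) :
    bra s t u (v + v') = bra s t u v + bra s t u v' := by
  unfold bra
  rw [← Finsupp.sum_add]
  refine Finsupp.sum_congr fun x cx => ?_
  rw [Finsupp.sum_add_index] <;> simp [mul_add, add_smul]

lemma bra_smul_left (s t : E → V) (c : ℝ) (u v : nQ s t) :
    bra s t (c • u) v = c • bra s t u v := by
  unfold bra
  rw [Finsupp.sum_smul_index (by simp), Finsupp.smul_sum]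
  refine Finsupp.sum_congr fun x _ => ?_
  rw [Finsupp.smul_sum]
  exact Finsupp.sum_congr fun y _ => by rw [mul_assoc, mul_smul]

lemma bra_smul_right (s t : E → V) (c : ℝ) (u v : nQ s t) :
    bra s t u (c • v) = c • bra s t u v := by
  unfold bra
  rw [Finsupp.smul_sum]
  refine Finsupp.sum_congr fun x cx => ?_
  rw [Finsupp.sum_smul_index (by simp), Finsupp.smul_sum]
  exact Finsupp.sum_congr fun y _ => by rw [smul_smul, mul_left_comm]

lemma braBasis_mem (s t : E → V) (i j : ℕ) (x y : PathQ s t)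
    (hx : x.val.length = i) (hy : y.val.length = j) :
    braBasis s t x y ∈ lenSubspace s t (i + j) := by
  unfold braBasis
  split_ifs with h h'
  · exact Submodule.subset_span ⟨⟨_, h⟩, by simp [hx, hy], rfl⟩
  · exact neg_mem (Submodule.subset_span ⟨⟨_, h'⟩, by simp [hx, hy, add_comm], rfl⟩)
  · exact zero_mem _

lemma bra_mem (s t : E → V) (i j : ℕ) {u v : nQ s t}
    (hu : u ∈ lenSubspace s t i) (hv : v ∈ lenSubspace s t j) :
    bra s t u v ∈ lenSubspace s t (i + j) := by
  induction hu using Submodule.span_induction with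
  | mem u hu =>
    obtain ⟨p, hp, rfl⟩ := hu
    induction hv using Submodule.span_induction with
    | mem v hv =>
      obtain ⟨q, hq, rfl⟩ := hv
      rw [bra_single_single]
      simpa using braBasis_mem s t i j p q hp hq
    | zero => simp [bra, zero_mem]
    | add v v' _ _ h1 h2 => rw [bra_add_right]; exact add_mem h1 h2
    | smul c v _ h1 => rw [bra_smul_right]; exact Submodule.smul_mem _ _ h1
  | zero => rw [bra_zero_left]; exact zero_mem _
  | add u u' _ _ h1 h2 => rw [bra_add_left]; exact add_mem h1 h2
  | smul c u _ h1 => rw [bra_smul_left]; exact Submodule.smul_mem _ _ h1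

theorem bracket_of_length_subspaces' [Finite V] [Finite E] (s t : E → V)
    (hQ : NoCycles s t) (i j : ℕ) (hi : 1 ≤ i) (hj : 1 ≤ j) :
    braSpan s t (lenSubspace s t i) (lenSubspace s t j) = lenSubspace s t (i + j) := by
  apply le_antisymm
  · rw [braSpan, Submodule.span_le]
    rintro z ⟨u, hu, v, hv, rfl⟩
    exact bra_mem s t i j hu hv
  · rw [lenSubspace, Submodule.span_le]
    rintro z ⟨r, hr, rfl⟩
    have hxy : r.val.take i ++ r.val.drop i = r.val := List.take_append_drop i r.val
    have hch := r.property.2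
    rw [← hxy, List.Chain', List.isChain_append] at hch
    have hlx : (r.val.take i).length = i := by
      rw [List.length_take, hr]; omega
    have hly : (r.val.drop i).length = j := by
      rw [List.length_drop, hr]; omega
    have hx : IsPath s t (r.val.take i) :=
      ⟨List.ne_nil_of_length_pos (by omega), hch.1⟩
    have hy : IsPath s t (r.val.drop i) :=
      ⟨List.ne_nil_of_length_pos (by omega), hch.2.1⟩
    set x : PathQ s t := ⟨r.val.take i, hx⟩
    set y : PathQ s t := ⟨r.val.drop i, hy⟩
    have hcat : IsPath s t (x.val ++ y.val) := by rw [hxy]; exact r.property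
    have hbb : braBasis s t x y = Finsupp.single r 1 := by
      unfold braBasis
      rw [dif_pos hcat]
      congr 1
      exact Subtype.ext hxy
    apply Submodule.subset_span
    refine ⟨Finsupp.single x 1, Submodule.subset_span ⟨x, hlx, rfl⟩,
      Finsupp.single y 1, Submodule.subset_span ⟨y, hly, rfl⟩, ?_⟩
    rw [bra_single_single, hbb, one_mul, one_smul]

/-- For a finite quiver without cycles,
`[n_Q^i, n_Q^j] = n_Q^(i+j)` for all `i, j ≥ 1`. -/
theorem bracket_of_length_subspaces [Finite V] [Finite E] (s t : E → V)
    (hQ : NoCycles s t) (i j : ℕ) (hi : 1 ≤ i) (hj : 1 ≤ j) :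
    braSpan s t (lenSubspace s t i) (lenSubspace s t j) = lenSubspace s t (i + j) :=
  bracket_of_length_subspaces' s t hQ i j hi hj

end
end

section
/- Let Q be a finite quiver without cycles of length m (i.e. m is the maximum of the lengths of paths in Q). Then the Lie algebra n_Q obtained by Q is m-step nilpotent: with C⁰n_Q = n_Q and C^k n_Q = [C^{k−1}n_Q, n_Q], one has C^{m−1}n_Q ≠ 0 and C^m n_Q = 0. -/
open scoped Classical

noncomputable section

variable {V E : Type*}

/-- The descending central series of `n_Q`: `C⁰ n_Q = n_Q`, `Cᵏ n_Q = [Cᵏ⁻¹ n_Q, n_Q]`. -/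
def lcs (s t : E → V) : ℕ → Submodule ℝ (nQ s t)
  | 0 => ⊤
  | (k+1) => braSpan s t (lcs s t k) ⊤


lemma braBasis_mem_supported (s t : E → V) {k : ℕ} (x y : PathQ s t)
    (hx : k + 1 ≤ x.val.length) :
    braBasis s t x y ∈ Finsupp.supported ℝ ℝ {p : PathQ s t | k + 2 ≤ p.val.length} := by
  have hy : 1 ≤ y.val.length := List.length_pos_iff.mpr y.prop.1
  unfold braBasis
  split_ifs with h h'
  · exact Finsupp.single_mem_supported ℝ 1 (by simp only [Set.mem_setOf_eq, List.length_append]; omega)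
  · exact Submodule.neg_mem _
      (Finsupp.single_mem_supported ℝ 1 (by simp only [Set.mem_setOf_eq, List.length_append]; omega))
  · exact Submodule.zero_mem _

lemma lcs_le_supported (s t : E → V) (k : ℕ) :
    lcs s t k ≤ Finsupp.supported ℝ ℝ {p : PathQ s t | k + 1 ≤ p.val.length} := by
  induction k with
  | zero =>
    intro f _
    rw [Finsupp.mem_supported]
    intro p _
    exact List.length_pos_iff.mpr p.prop.1
  | succ k ih =>
    show braSpan s t (lcs s t k) ⊤ ≤ _
    apply Submodule.span_le.mpr
    rintro z ⟨u, hu, v, -, rfl⟩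
    have hu' := Finsupp.mem_supported ℝ u |>.mp (ih hu)
    unfold bra
    rw [Finsupp.sum]
    refine Submodule.sum_mem _ fun x hx => ?_
    rw [Finsupp.sum]
    refine Submodule.sum_mem _ fun y hy => Submodule.smul_mem _ _ ?_
    exact braBasis_mem_supported s t x y (hu' hx)

lemma bra_single (s t : E → V) (x y : PathQ s t) :
    bra s t (Finsupp.single x (1:ℝ)) (Finsupp.single y (1:ℝ)) = braBasis s t x y := by
  unfold bra
  rw [Finsupp.sum_single_index, Finsupp.sum_single_index] <;>
    simp [Finsupp.sum_single_index]

lemma single_mem_lcs (s t : E → V) :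
    ∀ (k : ℕ) (l : List E) (h : IsPath s t l), l.length = k + 1 →
      Finsupp.single (⟨l, h⟩ : PathQ s t) (1:ℝ) ∈ lcs s t k := by
  intro k
  induction k with
  | zero => intro l h _; exact Submodule.mem_top
  | succ k ih =>
    intro l h hlen
    have hne : l ≠ [] := h.1
    obtain ⟨l', e, rfl⟩ : ∃ l' e, l = l' ++ [e] :=
      ⟨l.dropLast, l.getLast hne, (List.dropLast_append_getLast hne).symm⟩
    have hlen' : l'.length = k + 1 := by
      simp only [List.length_append, List.length_singleton] at hlen; omega
    have hpl' : IsPath s t l' :=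
      ⟨by intro hc; simp [hc] at hlen', h.2.prefix ⟨[e], rfl⟩⟩
    have hpe : IsPath s t [e] := ⟨by simp, List.IsChain.singleton e⟩
    have key : bra s t (Finsupp.single (⟨l', hpl'⟩ : PathQ s t) 1)
        (Finsupp.single (⟨[e], hpe⟩ : PathQ s t) 1)
        = Finsupp.single (⟨l' ++ [e], h⟩ : PathQ s t) 1 := by
      rw [bra_single]
      unfold braBasis
      rw [dif_pos h]
    show _ ∈ braSpan s t (lcs s t k) ⊤
    rw [← key]
    exact Submodule.subset_span
      ⟨_, ih l' hpl' hlen', _, Submodule.mem_top, rfl⟩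

/-- If `Q` is a finite quiver without cycles of length `m`, then `n_Q`
is `m`-step nilpotent: `C^(m-1) n_Q ≠ 0` and `C^m n_Q = 0`. -/
theorem nQ_is_m_step_nilpotent [Finite V] [Finite E] (s t : E → V)
    (hQ : NoCycles s t) (m : ℕ) (hm : IsMaxPathLen s t m) :
    lcs s t (m - 1) ≠ ⊥ ∧ lcs s t m = ⊥ := by
  obtain ⟨⟨l0, hl0, hlen0⟩, hmax⟩ := hm
  have hm1 : 1 ≤ m := by
    have := List.length_pos_iff.mpr hl0.1; omega
  constructor
  · intro hbot
    have hmem : Finsupp.single (⟨l0, hl0⟩ : PathQ s t) (1:ℝ) ∈ lcs s t (m - 1) :=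
      single_mem_lcs s t (m - 1) l0 hl0 (by omega)
    rw [hbot, Submodule.mem_bot] at hmem
    exact one_ne_zero (Finsupp.single_eq_zero.mp hmem)
  · refine le_bot_iff.mp ?_
    refine le_trans (lcs_le_supported s t m) ?_
    have : {p : PathQ s t | m + 1 ≤ p.val.length} = (∅ : Set (PathQ s t)) := by
      ext p
      simp only [Set.mem_setOf_eq, Set.mem_empty_iff_false, iff_false, not_le]
      exact Nat.lt_succ_of_le (hmax p.val p.prop)
    rw [this, Finsupp.supported_empty]


end
end

section
/- Let Q be a finite quiver without cycles. Then Path(Q) is a nice basis of the Lie algebra n_Q: writing Path(Q) = {x₁,…,x_n} and [x_i,x_j] = Σ_k c_{ij}^k x_k, (1) for any i and j there exists at most one k with c_{ij}^k ≠ 0, and (2) for any i and k there exists at most one j with c_{ij}^k ≠ 0. -/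
open scoped Classical

noncomputable section

variable {V E : Type*}

/-- If the coefficient of `k` in `braBasis x y` is nonzero, then either `xy` is a path and
`k = xy`, or `yx` is a path and `k = yx`. -/
lemma braBasis_ne_zero_cases {s t : E → V} {x y k : PathQ s t}
    (h : braBasis s t x y k ≠ 0) :
    (IsPath s t (x.val ++ y.val) ∧ k.val = x.val ++ y.val) ∨
    (¬ IsPath s t (x.val ++ y.val) ∧ IsPath s t (y.val ++ x.val) ∧
      k.val = y.val ++ x.val) := by
  unfold braBasis at h
  split_ifs at h with h1 h2
  · left
    refine ⟨h1, ?_⟩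
    by_contra hk
    exact h (Finsupp.single_eq_of_ne' (fun he => hk (congrArg Subtype.val he.symm)))
  · right
    refine ⟨h1, h2, ?_⟩
    by_contra hk
    rw [Finsupp.coe_neg, Pi.neg_apply,
      Finsupp.single_eq_of_ne' (fun he => hk (congrArg Subtype.val he.symm))] at h
    exact h neg_zero
  · exact absurd rfl h

/-- The mixed case is impossible in a quiver without cycles: if `x ++ y₁ = y₂ ++ x` and
`y₂ ++ x` is a path (with `x`, `y₂` nonempty), then `y₂` would be a cycle. -/
lemma mixed_case_false {s t : E → V} (hQ : NoCycles s t) {x y₁ y₂ : List E}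
    (hx : x ≠ []) (hy₂ : y₂ ≠ []) (heq : x ++ y₁ = y₂ ++ x)
    (hp : IsPath s t (y₂ ++ x)) : False := by
  obtain ⟨-, hchain⟩ := hp
  rw [List.Chain', List.isChain_append] at hchain
  obtain ⟨hc₂, -, hjoin⟩ := hchain
  apply hQ y₂ ⟨hy₂, hc₂⟩
  -- heads: head of y₂ = head of (y₂ ++ x) = head of (x ++ y₁) = head of x
  have hhead : y₂.head? = x.head? := by
    have h1 : (y₂ ++ x).head? = y₂.head? := by
      rw [List.head?_append_of_ne_nil _ hy₂]
    have h2 : (x ++ y₁).head? = x.head? := by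
      rw [List.head?_append_of_ne_nil _ hx]
    rw [← h1, ← heq, h2]
  have hj : t (y₂.getLast hy₂) = s (x.head hx) :=
    hjoin _ (by simp [List.getLast?_eq_getLast hy₂]) _ (by simp [List.head?_eq_head hx])
  unfold src? tgt?
  rw [List.head?_eq_head hy₂, List.getLast?_eq_getLast hy₂, Option.map_some,
    Option.map_some, hj]
  have : y₂.head hy₂ = x.head hx := by
    have := hhead
    rw [List.head?_eq_head hy₂, List.head?_eq_head hx] at this
    exact Option.some.inj this
  rw [this]

/-- For a finite quiver without cycles, `Path(Q)` is a nice basis of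
`n_Q`: (1) for any basis paths `x, y` there is at most one basis path with nonzero
coefficient in `[x, y]`, and (2) for any basis paths `x, k` there is at most one basis
path `y` such that the coefficient of `k` in `[x, y]` is nonzero. -/
theorem pathQ_is_nice_basis [Finite V] [Finite E] (s t : E → V)
    (hQ : NoCycles s t) :
    (∀ x y k₁ k₂ : PathQ s t,
      braBasis s t x y k₁ ≠ 0 → braBasis s t x y k₂ ≠ 0 → k₁ = k₂) ∧
    (∀ x k y₁ y₂ : PathQ s t,
      braBasis s t x y₁ k ≠ 0 → braBasis s t x y₂ k ≠ 0 → y₁ = y₂) := by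
  constructor
  · intro x y k₁ k₂ h1 h2
    rcases braBasis_ne_zero_cases h1 with ⟨hp1, hk1⟩ | ⟨hn1, -, hk1⟩ <;>
      rcases braBasis_ne_zero_cases h2 with ⟨hp2, hk2⟩ | ⟨hn2, -, hk2⟩
    · exact Subtype.ext (hk1.trans hk2.symm)
    · exact absurd hp1 hn2
    · exact absurd hp2 hn1
    · exact Subtype.ext (hk1.trans hk2.symm)
  · intro x k y₁ y₂ h1 h2
    rcases braBasis_ne_zero_cases h1 with ⟨hp1, hk1⟩ | ⟨-, hp1, hk1⟩ <;>
      rcases braBasis_ne_zero_cases h2 with ⟨hp2, hk2⟩ | ⟨-, hp2, hk2⟩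
    · exact Subtype.ext (List.append_cancel_left (hk1.symm.trans hk2))
    · exact (mixed_case_false hQ x.prop.1 y₂.prop.1 (hk1.symm.trans hk2) hp2).elim
    · exact (mixed_case_false hQ x.prop.1 y₁.prop.1 (hk2.symm.trans hk1) hp1).elim
    · exact Subtype.ext (List.append_cancel_right (hk1.symm.trans hk2))

end
end

section
/- Let (n,⟨,⟩) be a finite-dimensional metric nilpotent Lie algebra over ℝ and let {X₁,…,X_n} be an orthonormal nice basis of (n,⟨,⟩). Then the Ricci operator is diagonal with respect to this basis: Ric(X_k) = r_k X_k for each k, where r_k = −(1/2) Σ_{i,j} ⟨[X_k,X_i],X_j⟩² + (1/2) Σ_{i<j} ⟨[X_i,X_j],X_k⟩². -/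
private lemma double_sum_lt {N : ℕ} (f : Fin N → Fin N → ℝ) (hdiag : ∀ i, f i i = 0)
    (hsymm : ∀ i j, f i j = f j i) :
    ∑ i, ∑ j, f i j = 2 * ∑ i, ∑ j, (if i < j then f i j else 0) := by
  have key : ∀ i j : Fin N, f i j =
      (if i < j then f i j else 0) + (if j < i then f i j else 0) := by
    intro i j
    rcases lt_trichotomy i j with h | h | h
    · simp [h, asymm h]
    · subst h; simp [hdiag]
    · simp [h, asymm h, not_lt.mpr h.le]
  calc ∑ i, ∑ j, f i j
      = ∑ i, ∑ j, ((if i < j then f i j else 0) + (if j < i then f i j else 0)) := by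
        simp_rw [← key]
    _ = (∑ i, ∑ j, if i < j then f i j else 0)
        + ∑ i, ∑ j, if j < i then f i j else 0 := by
        rw [← Finset.sum_add_distrib]
        exact Finset.sum_congr rfl fun i _ => Finset.sum_add_distrib
    _ = 2 * ∑ i, ∑ j, (if i < j then f i j else 0) := by
        rw [Finset.sum_comm (f := fun i j => if j < i then f i j else 0)]
        have : (∑ y : Fin N, ∑ x : Fin N, if y < x then f x y else 0)
            = ∑ i : Fin N, ∑ j : Fin N, if i < j then f i j else 0 := by
          refine Finset.sum_congr rfl fun i _ => Finset.sum_congr rfl fun j _ => ?_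
          rw [hsymm]
        rw [this]; ring

/-- Let `(n, ⟨,⟩)` be a finite-dimensional metric nilpotent Lie algebra
over `ℝ` and let `{X₁, …, X_N}` be an orthonormal nice basis. Then the Ricci operator
(the operator determined by the standard formula with respect to an orthonormal basis)
is diagonal with respect to this basis:
`Ric (X k) = r k • X k` with
`r k = -(1/2) Σᵢⱼ ⟨[X k, X i], X j⟩² + (1/2) Σ_{i<j} ⟨[X i, X j], X k⟩²`. -/
theorem ricci_diagonal_wrt_orthonormal_nice_basis
    {n : Type*} [LieRing n] [LieAlgebra ℝ n]
    (hnil : LieRing.IsNilpotent n)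
    {N : ℕ} (b : Module.Basis (Fin N) ℝ n)
    (ip : n →ₗ[ℝ] n →ₗ[ℝ] ℝ)
    (hsym : ∀ X Y : n, ip X Y = ip Y X)
    (hpos : ∀ X : n, X ≠ 0 → 0 < ip X X)
    (horth : ∀ i j : Fin N, ip (b i) (b j) = if i = j then 1 else 0)
    (hnice1 : ∀ i j k l : Fin N,
      b.repr ⁅b i, b j⁆ k ≠ 0 → b.repr ⁅b i, b j⁆ l ≠ 0 → k = l)
    (hnice2 : ∀ i k j₁ j₂ : Fin N,
      b.repr ⁅b i, b j₁⁆ k ≠ 0 → b.repr ⁅b i, b j₂⁆ k ≠ 0 → j₁ = j₂)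
    (Ric : n →ₗ[ℝ] n)
    (hRic : ∀ X Y : n, ip (Ric X) Y =
      -(1/2) * ∑ i, ∑ j, ip ⁅X, b i⁆ (b j) * ip ⁅Y, b i⁆ (b j)
      + (1/4) * ∑ i, ∑ j, ip ⁅b i, b j⁆ X * ip ⁅b i, b j⁆ Y) :
    ∀ k : Fin N, Ric (b k) =
      (-(1/2) * ∑ i, ∑ j, (ip ⁅b k, b i⁆ (b j))^2
        + (1/2) * ∑ i, ∑ j, (if i < j then (ip ⁅b i, b j⁆ (b k))^2 else 0)) • b k := by
  intro k
  have hrepr : ∀ (Z : n) (j : Fin N), ip Z (b j) = b.repr Z j := by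
    intro Z j
    conv_lhs => rw [← b.sum_repr Z]
    simp [map_sum, horth, Finset.sum_ite_eq', -Module.Basis.sum_repr]
  apply b.ext_elem
  intro l
  rw [← hrepr, ← hrepr, hRic, map_smul]
  simp only [LinearMap.smul_apply, smul_eq_mul, horth]
  by_cases hkl : k = l
  · subst hkl
    rw [if_pos rfl, mul_one]
    have h2 : ∑ i, ∑ j, (ip ⁅b i, b j⁆ (b k))^2
        = 2 * ∑ i, ∑ j, (if i < j then (ip ⁅b i, b j⁆ (b k))^2 else 0) :=
      double_sum_lt (fun i j => (ip ⁅b i, b j⁆ (b k))^2)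
        (fun i => by simp)
        (fun i j => by
          show (ip ⁅b i, b j⁆ (b k))^2 = (ip ⁅b j, b i⁆ (b k))^2
          have hsk : ip ⁅b j, b i⁆ (b k) = -(ip ⁅b i, b j⁆ (b k)) := by
            rw [show (⁅b j, b i⁆ : n) = -⁅b i, b j⁆ from (lie_skew (b j) (b i)).symm]
            simp only [map_neg, LinearMap.neg_apply]
          rw [hsk]; ring)
    simp only [← pow_two]
    rw [h2]; ring
  · rw [if_neg hkl, mul_zero]
    have s1 : ∀ i j : Fin N, ip ⁅b k, b i⁆ (b j) * ip ⁅b l, b i⁆ (b j) = 0 := by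
      intro i j
      rcases eq_or_ne (ip ⁅b k, b i⁆ (b j)) 0 with h | h
      · rw [h, zero_mul]
      · rcases eq_or_ne (ip ⁅b l, b i⁆ (b j)) 0 with h' | h'
        · rw [h', mul_zero]
        · exfalso
          rw [hrepr] at h h'
          have hA : b.repr ⁅b i, b k⁆ j ≠ 0 := by
            rw [show (⁅b i, b k⁆ : n) = -⁅b k, b i⁆ from (lie_skew (b i) (b k)).symm,
              map_neg]
            simpa using h
          have hB : b.repr ⁅b i, b l⁆ j ≠ 0 := by
            rw [show (⁅b i, b l⁆ : n) = -⁅b l, b i⁆ from (lie_skew (b i) (b l)).symm,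
              map_neg]
            simpa using h'
          exact hkl (hnice2 i j k l hA hB)
    have s2 : ∀ i j : Fin N, ip ⁅b i, b j⁆ (b k) * ip ⁅b i, b j⁆ (b l) = 0 := by
      intro i j
      rcases eq_or_ne (ip ⁅b i, b j⁆ (b k)) 0 with h | h
      · rw [h, zero_mul]
      · rcases eq_or_ne (ip ⁅b i, b j⁆ (b l)) 0 with h' | h'
        · rw [h', mul_zero]
        · exfalso
          rw [hrepr] at h h'
          exact hkl (hnice1 i j k l h h')
    simp only [s1, s2, Finset.sum_const_zero]
    ring
end

section
/- Let Q=(V,E,s,t) be a finite quiver without cycles of length m, with starting set S and associated quiver Q'. Then Path(Q) is the disjoint union of S and Path(Q'): every path of Q of positive length either is an arrow in S or is a path of Q', and no path is both. -/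
open scoped Classical

noncomputable section

variable {V E : Type*}

/-- The starting set `S` of a quiver of length `m`: the set of arrows `a` such that
`a x` is a path of length `m` for some path `x`. -/
def startSet (s t : E → V) (m : ℕ) : Set E :=
  {a | ∃ x : List E, IsPath s t x ∧ IsPath s t (a :: x) ∧ (a :: x).length = m}

/-- The arrow set `E' = (E ∖ S) ∪ {ab ∈ Path(Q) : a ∈ S, b ∈ E}` of the quiver `Q'`,
realized as a set of lists of arrows of `Q`. -/
def edgesQ' (s t : E → V) (m : ℕ) : Set (List E) :=
  {l | (∃ a : E, a ∉ startSet s t m ∧ l = [a]) ∨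
       (∃ a b : E, a ∈ startSet s t m ∧ IsPath s t [a, b] ∧ l = [a, b])}

/-- `L` is a decomposition of the list `l` of arrows as a path of the quiver `Q'`:
a nonempty chain of consecutively composable `Q'`-arrows whose concatenation is `l`. -/
def IsDecompQ' (s t : E → V) (m : ℕ) (L : List (List E)) (l : List E) : Prop :=
  L ≠ [] ∧ (∀ p ∈ L, p ∈ edgesQ' s t m) ∧
    L.Chain' (fun p q => tgt? t p = src? s q) ∧ L.flatten = l

/-- `l` underlies a path of the quiver `Q'`. -/
def IsPathQ' (s t : E → V) (m : ℕ) (l : List E) : Prop :=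
  ∃ L : List (List E), IsDecompQ' s t m L l

/-- `f : E → E` is an automorphism of the quiver `(V, E, s, t)`. -/
def IsQuivAut (s t : E → V) (f : E → E) : Prop :=
  Function.Bijective f ∧ ∀ x y : E, (t x = s y ↔ t (f x) = s (f y))

/-- `g` is an automorphism of the quiver whose arrow set is the set `ES` of lists of
arrows of `Q` (such as the quiver `Q'` with arrow set `edgesQ'`). -/
def IsQuivAutOn (s t : E → V) (ES : Set (List E)) (g : List E → List E) : Prop :=
  Set.BijOn g ES ES ∧
    ∀ p ∈ ES, ∀ q ∈ ES, (tgt? t p = src? s q ↔ tgt? t (g p) = src? s (g q))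

/-- The subspace `n' = span Path(Q')` of `n_Q`. -/
def nQ'span (s t : E → V) (m : ℕ) : Submodule ℝ (nQ s t) :=
  Submodule.span ℝ {u | ∃ p : PathQ s t, IsPathQ' s t m p.val ∧ u = Finsupp.single p 1}

/-- A single arrow, regarded as a path of length one. -/
def edgePath (s t : E → V) (a : E) : PathQ s t :=
  ⟨[a], ⟨List.cons_ne_nil _ _, by first | exact List.isChain_singleton _ | exact List.chain'_singleton _ | constructor⟩⟩

lemma isPath_append {s t : E → V} {l₁ l₂ : List E} (h₁ : IsPath s t l₁)
    (h₂ : IsPath s t l₂) (h : tgt? t l₁ = src? s l₂) : IsPath s t (l₁ ++ l₂) := by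
  refine ⟨by simp [h₁.1], ?_⟩
  change List.IsChain _ _
  rw [List.isChain_append]
  refine ⟨h₁.2, h₂.2, ?_⟩
  intro x hx y hy
  rw [Option.mem_def] at hx hy
  simp only [tgt?, src?, hx, hy, Option.map_some, Option.some.injEq] at h
  exact h

lemma src?_append {s : E → V} {l₁ : List E} (l₂ : List E) (h : l₁ ≠ []) :
    src? s (l₁ ++ l₂) = src? s l₁ := by
  cases l₁ with
  | nil => simp at h
  | cons a l => simp [src?]

lemma edges_isPath {s t : E → V} {m : ℕ} {p : List E} (hp : p ∈ edgesQ' s t m) :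
    IsPath s t p := by
  rcases hp with ⟨a, _, rfl⟩ | ⟨a, b, _, hab, rfl⟩
  · exact ⟨by simp, List.isChain_singleton _⟩
  · exact hab

lemma edges_ne_nil {s t : E → V} {m : ℕ} {p : List E} (hp : p ∈ edgesQ' s t m) :
    p ≠ [] := (edges_isPath hp).1

lemma src?_flatten {s t : E → V} {m : ℕ} {L : List (List E)} {q : List E}
    (hL : ∀ p ∈ L, p ∈ edgesQ' s t m) (hq : L.head? = some q) :
    src? s L.flatten = src? s q := by
  cases L with
  | nil => simp at hq
  | cons p L' =>
    obtain rfl : p = q := by simpa using hq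
    rw [List.flatten_cons]
    exact src?_append _ (edges_ne_nil (hL p (by simp)))

lemma flatten_isPath {s t : E → V} {m : ℕ} : ∀ {L : List (List E)}, L ≠ [] →
    (∀ p ∈ L, p ∈ edgesQ' s t m) →
    L.Chain' (fun p q => tgt? t p = src? s q) → IsPath s t L.flatten := by
  intro L
  induction L with
  | nil => simp
  | cons p L ih =>
    intro _ hmem hch
    cases L with
    | nil => simpa using edges_isPath (hmem p (by simp))
    | cons q L' =>
      have h2 : IsPath s t ((q :: L').flatten) :=
        ih (by simp) (fun r hr => hmem r (List.mem_cons_of_mem _ hr)) hch.tail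
      have hj : tgt? t p = src? s ((q :: L').flatten) := by
        rw [src?_flatten (fun r hr => hmem r (List.mem_cons_of_mem _ hr)) rfl]
        exact (List.isChain_cons_cons.mp hch).1
      simpa using isPath_append (edges_isPath (hmem p (by simp))) h2 hj

/-- If a path of length ≥ 2 ends with an arrow of the starting set, we get a path
of length > m, a contradiction. -/
lemma not_last_mem_startSet {s t : E → V} {m : ℕ} (hm : IsMaxPathLen s t m)
    {l : List E} {a : E} (hl : IsPath s t (l ++ [a])) (hne : l ≠ [])
    (ha : a ∈ startSet s t m) : False := by
  obtain ⟨x, _, hax, hlen⟩ := ha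
  have hch := List.isChain_append.mp hl.2
  have hl' : IsPath s t l := ⟨hne, hch.1⟩
  have hj : tgt? t l = src? s (a :: x) := by
    obtain ⟨y, hy⟩ := Option.isSome_iff_exists.1 (List.getLast?_isSome.2 hne)
    simp only [tgt?, src?, hy, List.head?_cons, Option.map_some]
    exact congrArg some (hch.2.2 y hy a (by simp))
  have hp : IsPath s t (l ++ (a :: x)) := isPath_append hl' hax hj
  have := hm.2 _ hp
  have hlne : 1 ≤ l.length := List.length_pos_iff.2 hne
  simp only [List.length_append, List.length_cons] at this hlen
  omega

lemma main_forward {s t : E → V} {m : ℕ} (hm : IsMaxPathLen s t m) :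
    ∀ n, ∀ l : List E, l.length ≤ n → IsPath s t l →
      (∃ a ∈ startSet s t m, l = [a]) ∨ IsPathQ' s t m l := by
  intro n
  induction n with
  | zero =>
    intro l h hl
    exact absurd (List.length_eq_zero_iff.mp (Nat.le_antisymm h (Nat.zero_le _))) hl.1
  | succ n ih =>
    intro l hlen hl
    obtain ⟨a, r, rfl⟩ := List.exists_cons_of_ne_nil hl.1
    by_cases ha : a ∈ startSet s t m
    · cases r with
      | nil => exact Or.inl ⟨a, ha, rfl⟩
      | cons b r' =>
        right
        have hab : IsPath s t [a, b] :=
          ⟨by simp, List.isChain_pair.2 (List.isChain_cons_cons.mp hl.2).1⟩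
        have habE : [a, b] ∈ edgesQ' s t m := Or.inr ⟨a, b, ha, hab, rfl⟩
        cases r' with
        | nil => exact ⟨[[a, b]], by simp, by simpa using habE, List.isChain_singleton _, by simp⟩
        | cons c r'' =>
          have hr : IsPath s t (c :: r'') := ⟨by simp, (hl.2.tail).tail⟩
          have hlen' : (c :: r'').length ≤ n := by
            simp only [List.length_cons] at hlen ⊢; omega
          rcases ih (c :: r'') hlen' hr with ⟨d, hd, hdc⟩ | ⟨L, hL1, hL2, hL3, hL4⟩
          · obtain ⟨rfl, rfl⟩ : c = d ∧ r'' = [] := by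
              simpa [List.cons_eq_cons, eq_comm] using hdc
            exact absurd hd fun hd =>
              not_last_mem_startSet hm (l := [a, b]) (by simpa using hl) (by simp) hd
          · refine ⟨[a, b] :: L, by simp, ?_, ?_, by simp [hL4]⟩
            · intro p hp
              rcases List.mem_cons.mp hp with rfl | hp
              · exact habE
              · exact hL2 p hp
            · refine List.isChain_cons.2 ⟨?_, hL3⟩
              intro q hq
              have : src? s L.flatten = src? s q := src?_flatten hL2 hq
              rw [hL4] at this
              rw [← this]
              simp only [tgt?, src?, List.head?_cons, Option.map_some]
              simpa [tgt?] using congrArg some ((hl.2.tail).rel_head)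
    · cases r with
      | nil => exact Or.inr ⟨[[a]], by simp, fun p hp => by rw [List.mem_singleton.mp hp]; exact Or.inl ⟨a, ha, rfl⟩,
          List.isChain_singleton _, by simp⟩
      | cons b r' =>
        right
        have hr : IsPath s t (b :: r') := ⟨by simp, hl.2.tail⟩
        have hlen' : (b :: r').length ≤ n := by
          simp only [List.length_cons] at hlen ⊢; omega
        rcases ih (b :: r') hlen' hr with ⟨d, hd, hdb⟩ | ⟨L, hL1, hL2, hL3, hL4⟩
        · obtain ⟨rfl, rfl⟩ : b = d ∧ r' = [] := by
            simpa [List.cons_eq_cons, eq_comm] using hdb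
          exact absurd hd fun hd =>
            not_last_mem_startSet hm (l := [a]) (by simpa using hl) (by simp) hd
        · refine ⟨[a] :: L, by simp, ?_, ?_, by simp [hL4]⟩
          · intro p hp
            rcases List.mem_cons.mp hp with rfl | hp
            · exact Or.inl ⟨a, ha, rfl⟩
            · exact hL2 p hp
          · refine List.isChain_cons.2 ⟨?_, hL3⟩
            intro q hq
            have : src? s L.flatten = src? s q := src?_flatten hL2 hq
            rw [hL4] at this
            rw [← this]
            simp only [tgt?, src?, List.head?_cons, Option.map_some]
            simpa [tgt?] using congrArg some (hl.2.rel_head)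

/-- For a finite quiver `Q` without cycles of length `m`, `Path(Q)` is
the disjoint union of the starting set `S` (regarded as paths of length one) and
`Path(Q')`. -/
theorem pathQ_eq_startSet_disjUnion_pathQ' [Finite V] [Finite E] (s t : E → V)
    (hQ : NoCycles s t) (m : ℕ) (hm : IsMaxPathLen s t m) :
    ({l : List E | IsPath s t l} =
      {l : List E | ∃ a ∈ startSet s t m, l = [a]} ∪ {l : List E | IsPathQ' s t m l}) ∧
    (∀ l : List E, ¬((∃ a ∈ startSet s t m, l = [a]) ∧ IsPathQ' s t m l)) := by
  constructor
  · ext l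
    simp only [Set.mem_setOf_eq, Set.mem_union]
    constructor
    · intro hl
      exact main_forward hm l.length l le_rfl hl
    · rintro (⟨a, ha, rfl⟩ | ⟨L, hL1, hL2, hL3, hL4⟩)
      · exact ⟨by simp, List.isChain_singleton _⟩
      · rw [← hL4]
        exact flatten_isPath hL1 hL2 hL3
  · rintro l ⟨⟨a, ha, rfl⟩, L, hL1, hL2, hL3, hL4⟩
    cases L with
    | nil => exact hL1 rfl
    | cons p L' =>
      have hpne : p ≠ [] := edges_ne_nil (hL2 p (by simp))
      rw [List.flatten_cons] at hL4
      have hplen : p.length = 1 ∧ L'.flatten = [] := by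
        have := congrArg List.length hL4
        simp only [List.length_append, List.length_cons, List.length_nil] at this
        have : p.length + L'.flatten.length = 1 := this
        have h1 : 1 ≤ p.length := List.length_pos_iff.2 hpne
        constructor
        · omega
        · exact List.length_eq_zero_iff.mp (by omega)
      have hpa : p = [a] := by
        rw [hplen.2, List.append_nil] at hL4
        exact hL4
      rcases hL2 p (by simp) with ⟨b, hb, hpb⟩ | ⟨b, c, _, _, hpbc⟩
      · rw [hpa] at hpb
        obtain rfl : a = b := by simpa using hpb
        exact hb ha
      · rw [hpa] at hpbc
        simp at hpbc

end
end
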